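/- Let n ≥ 2 and 1 ≤ n₁ < n be integers and let k ∈ ℕ. In the polynomial ring ℝ[x₁,…,xₙ], let M_k be the set of all products ∏_{1≤i≤n₁, n₁+1≤t≤n} (x_i·x_t)^{p_{it}} taken over all tuples of natural numbers (p_{it})_{1≤i≤n₁, n₁+1≤t≤n} with ∑_{i,t} p_{it} = k. Then the dimension of the ℝ-linear span of M_k equals C(n₁+k−1, k)·C(n−n₁+k−1, k). -/

import Mathlib

open Finset MvPolynomial

lemma aux_card_piAntidiag_univ (γ : Type*) [Fintype γ] [DecidableEq γ] (k : ℕ) :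
    (Finset.piAntidiag (univ : Finset γ) k).card = (Fintype.card γ + k - 1).choose k := by
  rw [← Finset.map_sym_eq_piAntidiag, Finset.card_map, Finset.sym_univ, Finset.card_univ,
    Sym.card_sym_eq_choose]

lemma aux_card_piAntidiag {ι : Type*} [DecidableEq ι] (s : Finset ι) (k : ℕ) :
    (Finset.piAntidiag s k).card = (s.card + k - 1).choose k := by
  classical
  have := aux_card_piAntidiag_univ {x // x ∈ s} k
  rw [Fintype.card_coe] at this
  rw [← this]
  refine Finset.card_nbij' (fun f => fun x => f x.val)
    (fun g => fun i => if h : i ∈ s then g ⟨i, h⟩ else 0) ?_ ?_ ?_ ?_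
  · intro f hf
    rw [Finset.mem_coe, Finset.mem_piAntidiag] at hf ⊢
    refine ⟨?_, fun i _ => Finset.mem_univ i⟩
    rw [Finset.univ_eq_attach, ← hf.1, Finset.sum_attach]
  · intro g hg
    rw [Finset.mem_coe, Finset.mem_piAntidiag] at hg ⊢
    constructor
    · rw [← Finset.sum_attach s (fun i => if h : i ∈ s then g ⟨i, h⟩ else 0)]
      rw [← hg.1, Finset.univ_eq_attach]
      apply Finset.sum_congr rfl
      intro x _
      simp [x.2]
    · intro i hi
      by_contra h
      exact hi (dif_neg h)
  · intro f hf
    funext i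
    by_cases h : i ∈ s
    · simp [h]
    · rw [Finset.mem_coe, Finset.mem_piAntidiag] at hf
      simp only [dif_neg h]
      by_contra h2
      exact h (hf.2 i (fun h3 => h2 h3.symm))
  · intro g hg
    funext x
    simp [x.2]

lemma aux_count_getD {α : Type*} [DecidableEq α] (a₀ : α) :
    ∀ (l : List α) (i : α),
      (∑ j ∈ Finset.range l.length, if l.getD j a₀ = i then 1 else 0) = l.count i := by
  intro l
  induction l with
  | nil => simp
  | cons a l ih =>
    intro i
    rw [List.length_cons, Finset.sum_range_succ']
    simp only [List.getD_cons_succ, List.getD_cons_zero, List.count_cons, ih]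
    simp [beq_iff_eq]

lemma aux_card_filter_count {α : Type*} [DecidableEq α] (a₀ : α) (l : List α) {k : ℕ}
    (hk : l.length = k) (i : α) :
    (Finset.univ.filter fun j : Fin k => l.getD j.val a₀ = i).card = l.count i := by
  subst hk
  rw [Finset.card_filter,
    Fin.sum_univ_eq_sum_range (fun j => if l.getD j a₀ = i then 1 else 0) l.length,
    aux_count_getD]

lemma aux_prod_monomial {σ : Type*} {ι : Type*} (s : Finset ι) (d : ι → (σ →₀ ℕ)) :
    ∏ j ∈ s, (monomial (d j) (1 : ℝ)) = monomial (∑ j ∈ s, d j) (1 : ℝ) := by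
  classical
  induction s using Finset.induction with
  | empty => simp
  | insert a s h ih =>
    rw [Finset.prod_insert h, Finset.sum_insert h, ih, monomial_mul, one_mul]

theorem stmt_0 (n n₁ : ℕ) (hn : 2 ≤ n) (h1 : 1 ≤ n₁) (h2 : n₁ < n) (k : ℕ) :
    Module.finrank ℝ (Submodule.span ℝ
      {f : MvPolynomial (Fin n) ℝ |
        ∃ p : Fin n → Fin n → ℕ,
          (∑ i ∈ Finset.univ.filter (fun i : Fin n => i.val < n₁),
            ∑ t ∈ Finset.univ.filter (fun t : Fin n => n₁ ≤ t.val), p i t) = k ∧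
          f = ∏ i ∈ Finset.univ.filter (fun i : Fin n => i.val < n₁),
              ∏ t ∈ Finset.univ.filter (fun t : Fin n => n₁ ≤ t.val),
                (X i * X t) ^ p i t}) =
    Nat.choose (n₁ + k - 1) k * Nat.choose (n - n₁ + k - 1) k := by
  classical
  set A := Finset.univ.filter (fun i : Fin n => i.val < n₁) with hA
  set B := Finset.univ.filter (fun t : Fin n => n₁ ≤ t.val) with hB
  have hABd : ∀ j : Fin n, j ∈ A → j ∈ B → False := by
    intro j hj1 hj2
    rw [hA, Finset.mem_filter] at hj1
    rw [hB, Finset.mem_filter] at hj2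
    omega
  have hABu : ∀ j : Fin n, j ∈ A ∨ j ∈ B := by
    intro j
    rw [hA, hB, Finset.mem_filter, Finset.mem_filter]
    simp only [Finset.mem_univ, true_and]
    omega
  have cardA : A.card = n₁ := by
    rw [show n₁ = (Finset.range n₁).card from (Finset.card_range n₁).symm]
    refine Finset.card_nbij (s := A) (t := Finset.range n₁) (fun j => j.val) ?_ ?_ ?_
    · intro a ha
      rw [hA, Finset.mem_coe, Finset.mem_filter] at ha
      exact Finset.mem_range.2 ha.2
    · intro a _ b _ h
      exact Fin.val_injective h
    · intro a ha
      rw [Finset.mem_coe, Finset.mem_range] at ha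
      exact ⟨⟨a, lt_trans ha h2⟩,
        by rw [Finset.mem_coe, hA, Finset.mem_filter]; exact ⟨Finset.mem_univ _, ha⟩, rfl⟩
  have cardB : B.card = n - n₁ := by
    rw [show n - n₁ = (Finset.range (n - n₁)).card from (Finset.card_range _).symm]
    refine Finset.card_nbij (s := B) (t := Finset.range (n - n₁)) (fun j => j.val - n₁) ?_ ?_ ?_
    · intro a ha
      rw [hB, Finset.mem_coe, Finset.mem_filter] at ha
      have := a.isLt
      show a.val - n₁ ∈ Finset.range (n - n₁)
      rw [Finset.mem_range]
      omega
    · intro a ha b hb h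
      rw [Finset.mem_coe, hB, Finset.mem_filter] at ha hb
      simp only at h
      exact Fin.val_injective (by omega)
    · intro a ha
      rw [Finset.mem_coe, Finset.mem_range] at ha
      refine ⟨⟨a + n₁, by omega⟩, ?_, by simp⟩
      rw [Finset.mem_coe, hB, Finset.mem_filter]
      exact ⟨Finset.mem_univ _, by simp⟩
  have key : ∀ p : Fin n → Fin n → ℕ,
      (∏ i ∈ A, ∏ t ∈ B, (X i * X t : MvPolynomial (Fin n) ℝ) ^ p i t)
        = monomial (∑ i ∈ A, ∑ t ∈ B,
            p i t • (Finsupp.single i 1 + Finsupp.single t 1)) 1 := by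
    intro p
    have h1 : ∀ i t : Fin n, (X i * X t : MvPolynomial (Fin n) ℝ) ^ p i t
        = monomial (p i t • (Finsupp.single i 1 + Finsupp.single t 1)) 1 := by
      intro i t
      rw [show (X i : MvPolynomial (Fin n) ℝ) = monomial (Finsupp.single i 1) 1 from rfl,
        show (X t : MvPolynomial (Fin n) ℝ) = monomial (Finsupp.single t 1) 1 from rfl,
        monomial_mul, monomial_pow, one_mul, one_pow]
    simp_rw [h1, aux_prod_monomial]
  have happly : ∀ (p : Fin n → Fin n → ℕ) (j : Fin n),
      ((∑ i ∈ A, ∑ t ∈ B, p i t • (Finsupp.single i 1 + Finsupp.single t 1) : Fin n →₀ ℕ)) j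
        = ∑ i ∈ A, ∑ t ∈ B, p i t * ((if i = j then 1 else 0) + (if t = j then 1 else 0)) := by
    intro p j
    simp only [Finsupp.finset_sum_apply, Finsupp.smul_apply, Finsupp.add_apply,
      Finsupp.single_apply, smul_eq_mul]
  have sumA : ∀ p : Fin n → Fin n → ℕ,
      (∑ j ∈ A, ((∑ i ∈ A, ∑ t ∈ B, p i t • (Finsupp.single i 1 + Finsupp.single t 1) : Fin n →₀ ℕ)) j)
        = ∑ i ∈ A, ∑ t ∈ B, p i t := by
    intro p
    rw [Finset.sum_congr rfl (fun j _ => happly p j), Finset.sum_comm]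
    refine Finset.sum_congr rfl (fun i hi => ?_)
    rw [Finset.sum_comm]
    refine Finset.sum_congr rfl (fun t ht => ?_)
    rw [← Finset.mul_sum, Finset.sum_add_distrib, Finset.sum_ite_eq, Finset.sum_ite_eq,
      if_pos hi, if_neg (fun h => hABd t h ht), add_zero, mul_one]
  have sumB : ∀ p : Fin n → Fin n → ℕ,
      (∑ j ∈ B, ((∑ i ∈ A, ∑ t ∈ B, p i t • (Finsupp.single i 1 + Finsupp.single t 1) : Fin n →₀ ℕ)) j)
        = ∑ i ∈ A, ∑ t ∈ B, p i t := by
    intro p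
    rw [Finset.sum_congr rfl (fun j _ => happly p j), Finset.sum_comm]
    refine Finset.sum_congr rfl (fun i hi => ?_)
    rw [Finset.sum_comm]
    refine Finset.sum_congr rfl (fun t ht => ?_)
    rw [← Finset.mul_sum, Finset.sum_add_distrib, Finset.sum_ite_eq, Finset.sum_ite_eq,
      if_neg (fun h => hABd i hi h), if_pos ht, zero_add, mul_one]
  have transport : ∀ d : Fin n →₀ ℕ, (∑ i ∈ A, d i) = k → (∑ t ∈ B, d t) = k →
      ∃ p : Fin n → Fin n → ℕ, (∑ i ∈ A, ∑ t ∈ B, p i t) = k ∧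
        (∑ i ∈ A, ∑ t ∈ B, p i t • (Finsupp.single i 1 + Finsupp.single t 1) : Fin n →₀ ℕ) = d := by
    intro d hdA hdB
    set m₁ : Multiset (Fin n) := ∑ i ∈ A, (d i • {i}) with hm₁
    set m₂ : Multiset (Fin n) := ∑ t ∈ B, (d t • {t}) with hm₂
    have hc₁ : Multiset.card m₁ = k := by
      rw [hm₁, ← hdA, Multiset.card_sum]
      refine Finset.sum_congr rfl (fun i _ => ?_)
      rw [Multiset.card_nsmul, Multiset.card_singleton, mul_one]
    have hc₂ : Multiset.card m₂ = k := by
      rw [hm₂, ← hdB, Multiset.card_sum]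
      refine Finset.sum_congr rfl (fun i _ => ?_)
      rw [Multiset.card_nsmul, Multiset.card_singleton, mul_one]
    have hcount₁ : ∀ i ∈ A, m₁.count i = d i := by
      intro i hi
      rw [hm₁, Multiset.count_sum']
      simp only [Multiset.count_nsmul, Multiset.count_singleton, mul_ite, mul_one, mul_zero]
      rw [Finset.sum_ite_eq, if_pos hi]
    have hcount₂ : ∀ t ∈ B, m₂.count t = d t := by
      intro t ht
      rw [hm₂, Multiset.count_sum']
      simp only [Multiset.count_nsmul, Multiset.count_singleton, mul_ite, mul_one, mul_zero]
      rw [Finset.sum_ite_eq, if_pos ht]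
    have hmem₁ : ∀ x ∈ m₁, x ∈ A := by
      intro x hx
      rw [hm₁, Multiset.mem_sum] at hx
      obtain ⟨i, hi, hxi⟩ := hx
      rw [Multiset.mem_nsmul] at hxi
      rw [Multiset.mem_singleton.1 hxi.2]
      exact hi
    have hmem₂ : ∀ x ∈ m₂, x ∈ B := by
      intro x hx
      rw [hm₂, Multiset.mem_sum] at hx
      obtain ⟨i, hi, hxi⟩ := hx
      rw [Multiset.mem_nsmul] at hxi
      rw [Multiset.mem_singleton.1 hxi.2]
      exact hi
    set a₀ : Fin n := ⟨0, by omega⟩ with ha₀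
    set l₁ := m₁.toList with hl₁def
    set l₂ := m₂.toList with hl₂def
    have hl₁ : l₁.length = k := by rw [hl₁def, Multiset.length_toList, hc₁]
    have hl₂ : l₂.length = k := by rw [hl₂def, Multiset.length_toList, hc₂]
    set g₁ : Fin k → Fin n := fun j => l₁.getD j.val a₀ with hg₁
    set g₂ : Fin k → Fin n := fun j => l₂.getD j.val a₀ with hg₂
    have hg₁A : ∀ j : Fin k, g₁ j ∈ A := by
      intro j
      apply hmem₁
      have hlt : j.val < l₁.length := by rw [hl₁]; exact j.isLt
      have hge : g₁ j = l₁[j.val] := List.getD_eq_getElem _ _ hlt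
      rw [← Multiset.mem_toList, ← hl₁def, hge]
      exact List.getElem_mem hlt
    have hg₂B : ∀ j : Fin k, g₂ j ∈ B := by
      intro j
      apply hmem₂
      have hlt : j.val < l₂.length := by rw [hl₂]; exact j.isLt
      have hge : g₂ j = l₂[j.val] := List.getD_eq_getElem _ _ hlt
      rw [← Multiset.mem_toList, ← hl₂def, hge]
      exact List.getElem_mem hlt
    set p : Fin n → Fin n → ℕ :=
      fun i t => (Finset.univ.filter (fun j : Fin k => g₁ j = i ∧ g₂ j = t)).card with hp
    have rowsum : ∀ i ∈ A, (∑ t ∈ B, p i t) = d i := by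
      intro i hi
      have e2 : ∀ j : Fin k, (∑ t ∈ B, if g₁ j = i ∧ g₂ j = t then 1 else 0)
          = if g₁ j = i then 1 else 0 := by
        intro j
        by_cases hc : g₁ j = i
        · simp only [hc, true_and, if_true]
          rw [Finset.sum_ite_eq, if_pos (hg₂B j)]
        · simp [hc]
      calc (∑ t ∈ B, p i t) = ∑ t ∈ B, ∑ j : Fin k, (if g₁ j = i ∧ g₂ j = t then 1 else 0) := by
            exact Finset.sum_congr rfl (fun t _ => Finset.card_filter _ _)
        _ = ∑ j : Fin k, ∑ t ∈ B, (if g₁ j = i ∧ g₂ j = t then 1 else 0) := Finset.sum_comm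
        _ = ∑ j : Fin k, (if g₁ j = i then 1 else 0) :=
            Finset.sum_congr rfl (fun j _ => e2 j)
        _ = (Finset.univ.filter (fun j : Fin k => g₁ j = i)).card := (Finset.card_filter _ _).symm
        _ = l₁.count i := aux_card_filter_count a₀ l₁ hl₁ i
        _ = m₁.count i := by rw [hl₁def, ← Multiset.coe_count, Multiset.coe_toList]
        _ = d i := hcount₁ i hi
    have colsum : ∀ t ∈ B, (∑ i ∈ A, p i t) = d t := by
      intro t ht
      have e2 : ∀ j : Fin k, (∑ i ∈ A, if g₁ j = i ∧ g₂ j = t then 1 else 0)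
          = if g₂ j = t then 1 else 0 := by
        intro j
        by_cases hc : g₂ j = t
        · simp only [hc, and_true, if_true]
          rw [Finset.sum_ite_eq, if_pos (hg₁A j)]
        · simp [hc]
      calc (∑ i ∈ A, p i t) = ∑ i ∈ A, ∑ j : Fin k, (if g₁ j = i ∧ g₂ j = t then 1 else 0) := by
            exact Finset.sum_congr rfl (fun i _ => Finset.card_filter _ _)
        _ = ∑ j : Fin k, ∑ i ∈ A, (if g₁ j = i ∧ g₂ j = t then 1 else 0) := Finset.sum_comm
        _ = ∑ j : Fin k, (if g₂ j = t then 1 else 0) :=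
            Finset.sum_congr rfl (fun j _ => e2 j)
        _ = (Finset.univ.filter (fun j : Fin k => g₂ j = t)).card := (Finset.card_filter _ _).symm
        _ = l₂.count t := aux_card_filter_count a₀ l₂ hl₂ t
        _ = m₂.count t := by rw [hl₂def, ← Multiset.coe_count, Multiset.coe_toList]
        _ = d t := hcount₂ t ht
    refine ⟨p, ?_, ?_⟩
    · rw [Finset.sum_congr rfl rowsum, hdA]
    · ext j
      rw [happly]
      rcases hABu j with hj | hj
      · calc (∑ i ∈ A, ∑ t ∈ B, p i t * ((if i = j then 1 else 0) + (if t = j then 1 else 0)))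
            = ∑ i ∈ A, (if i = j then ∑ t ∈ B, p i t else 0) := by
              refine Finset.sum_congr rfl (fun i hi => ?_)
              by_cases hij : i = j
              · have hsum : (∑ t ∈ B, p i t * ((if i = j then 1 else 0)
                    + (if t = j then 1 else 0))) = ∑ t ∈ B, p i t := by
                  refine Finset.sum_congr rfl (fun t ht => ?_)
                  rw [if_pos hij, if_neg (fun h : t = j => hABd j hj (h ▸ ht)), add_zero, mul_one]
                rw [hsum, if_pos hij]
              · have hsum : (∑ t ∈ B, p i t * ((if i = j then 1 else 0)
                    + (if t = j then 1 else 0))) = 0 := by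
                  refine Finset.sum_eq_zero (fun t ht => ?_)
                  rw [if_neg hij, if_neg (fun h : t = j => hABd j hj (h ▸ ht)), add_zero, mul_zero]
                rw [hsum, if_neg hij]
          _ = d j := by rw [Finset.sum_ite_eq', if_pos hj, rowsum j hj]
      · calc (∑ i ∈ A, ∑ t ∈ B, p i t * ((if i = j then 1 else 0) + (if t = j then 1 else 0)))
            = ∑ i ∈ A, ∑ t ∈ B, (if t = j then p i t else 0) := by
              refine Finset.sum_congr rfl (fun i hi => ?_)
              refine Finset.sum_congr rfl (fun t ht => ?_)
              rw [if_neg (fun h : i = j => hABd j (h ▸ hi) hj), zero_add]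
              by_cases htj : t = j
              · rw [if_pos htj, if_pos htj, mul_one]
              · rw [if_neg htj, if_neg htj, mul_zero]
          _ = ∑ i ∈ A, (if j ∈ B then p i j else 0) := by
              refine Finset.sum_congr rfl (fun i _ => ?_)
              rw [Finset.sum_ite_eq']
          _ = d j := by
              rw [Finset.sum_congr rfl (fun i (_ : i ∈ A) => if_pos hj), colsum j hj]
  set Dfin : Finset (Fin n →₀ ℕ) :=
    ((Finset.piAntidiag A k) ×ˢ (Finset.piAntidiag B k)).image
      (fun fg => Finsupp.equivFunOnFinite.symm (fg.1 + fg.2)) with hDfin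
  have memD : ∀ d : Fin n →₀ ℕ, d ∈ Dfin ↔ ((∑ i ∈ A, d i) = k ∧ (∑ t ∈ B, d t) = k) := by
    intro d
    rw [hDfin]
    constructor
    · intro hd
      rw [Finset.mem_image] at hd
      obtain ⟨fg, hfg, rfl⟩ := hd
      rw [Finset.mem_product, Finset.mem_piAntidiag, Finset.mem_piAntidiag] at hfg
      obtain ⟨⟨hf1, hf2⟩, hg1, hg2⟩ := hfg
      have happ : ∀ j, (Finsupp.equivFunOnFinite.symm (fg.1 + fg.2)) j = fg.1 j + fg.2 j :=
        fun j => rfl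
      constructor
      · rw [Finset.sum_congr rfl (fun j (_ : j ∈ A) => happ j), Finset.sum_add_distrib, hf1,
          Finset.sum_eq_zero (fun j hj => by
            by_contra hz
            exact hABd j hj (hg2 j hz)), add_zero]
      · rw [Finset.sum_congr rfl (fun j (_ : j ∈ B) => happ j), Finset.sum_add_distrib, hg1,
          Finset.sum_eq_zero (fun j hj => by
            by_contra hz
            exact hABd j (hf2 j hz) hj), zero_add]
    · rintro ⟨hd1, hd2⟩
      rw [Finset.mem_image]
      refine ⟨(fun j => if j ∈ A then d j else 0, fun j => if j ∈ B then d j else 0), ?_, ?_⟩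
      · rw [Finset.mem_product, Finset.mem_piAntidiag, Finset.mem_piAntidiag]
        refine ⟨⟨?_, fun i hi => ?_⟩, ?_, fun i hi => ?_⟩
        · rw [← hd1]; exact Finset.sum_congr rfl (fun j hj => if_pos hj)
        · by_contra h; exact hi (if_neg h)
        · rw [← hd2]; exact Finset.sum_congr rfl (fun j hj => if_pos hj)
        · by_contra h; exact hi (if_neg h)
      · ext j
        show (if j ∈ A then d j else 0) + (if j ∈ B then d j else 0) = d j
        rcases hABu j with hj | hj
        · rw [if_pos hj, if_neg (fun h => hABd j hj h), add_zero]
        · rw [if_neg (fun h => hABd j h hj), if_pos hj, zero_add]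
  have hset : {f : MvPolynomial (Fin n) ℝ |
      ∃ p : Fin n → Fin n → ℕ, (∑ i ∈ A, ∑ t ∈ B, p i t) = k ∧
        f = ∏ i ∈ A, ∏ t ∈ B, (X i * X t) ^ p i t}
      = ↑(Dfin.image (fun d => (monomial d (1 : ℝ)))) := by
    ext f
    simp only [Set.mem_setOf_eq, Finset.coe_image, Set.mem_image, Finset.mem_coe]
    constructor
    · rintro ⟨p, hp, rfl⟩
      refine ⟨∑ i ∈ A, ∑ t ∈ B, p i t • (Finsupp.single i 1 + Finsupp.single t 1), ?_,
        (key p).symm⟩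
      rw [memD]
      exact ⟨by rw [sumA p, hp], by rw [sumB p, hp]⟩
    · rintro ⟨d, hd, rfl⟩
      rw [memD] at hd
      obtain ⟨p, hp1, hp2⟩ := transport d hd.1 hd.2
      exact ⟨p, hp1, by rw [key p, hp2]⟩
  rw [hset]
  have hli : LinearIndependent ℝ
      ((↑) : (Dfin.image (fun d => (monomial d (1:ℝ)))) → MvPolynomial (Fin n) ℝ) := by
    have hsub : ↑(Dfin.image (fun d => (monomial d (1:ℝ))))
        ⊆ Set.range (MvPolynomial.basisMonomials (Fin n) ℝ) := by
      intro f hf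
      rw [Finset.coe_image] at hf
      obtain ⟨d, _, rfl⟩ := hf
      exact ⟨d, congrFun (coe_basisMonomials (Fin n) ℝ) d⟩
    have hmono := LinearIndepOn.mono
      ((linearIndepOn_id_range_iff (MvPolynomial.basisMonomials (Fin n) ℝ).injective).2
        (MvPolynomial.basisMonomials (Fin n) ℝ).linearIndependent) hsub
    exact hmono
  rw [finrank_span_finset_eq_card hli]
  rw [Finset.card_image_of_injOn ((monomial_left_injective (one_ne_zero)).injOn)]
  have hinj2 : Set.InjOn
      (fun fg : (Fin n → ℕ) × (Fin n → ℕ) => Finsupp.equivFunOnFinite.symm (fg.1 + fg.2))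
      ↑((Finset.piAntidiag A k) ×ˢ (Finset.piAntidiag B k)) := by
    rintro ⟨f, g⟩ hfg ⟨f', g'⟩ hfg' h
    rw [Finset.mem_coe, Finset.mem_product, Finset.mem_piAntidiag, Finset.mem_piAntidiag]
      at hfg hfg'
    have h2 : f + g = f' + g' := Finsupp.equivFunOnFinite.symm.injective h
    have hfe : ∀ j, f j = f' j ∧ g j = g' j := by
      intro j
      have h3 : f j + g j = f' j + g' j := congrFun h2 j
      rcases hABu j with hj | hj
      · have hg0 : g j = 0 := by
          by_contra hz; exact hABd j hj (hfg.2.2 j hz)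
        have hg0' : g' j = 0 := by
          by_contra hz; exact hABd j hj (hfg'.2.2 j hz)
        exact ⟨by omega, by rw [hg0, hg0']⟩
      · have hf0 : f j = 0 := by
          by_contra hz; exact hABd j (hfg.1.2 j hz) hj
        have hf0' : f' j = 0 := by
          by_contra hz; exact hABd j (hfg'.1.2 j hz) hj
        exact ⟨by rw [hf0, hf0'], by omega⟩
    exact Prod.ext (funext fun j => (hfe j).1) (funext fun j => (hfe j).2)
  rw [hDfin, Finset.card_image_of_injOn hinj2, Finset.card_product,
    aux_card_piAntidiag, aux_card_piAntidiag, cardA, cardB]
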